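/- Let A be an n×n positive matrix with Σ_{i,j} a_{ij} = n, and let B be its doubly stochastic scaling (so a_{ij} = b_{ij} λᵢ μⱼ for some positive λᵢ, μⱼ, and B is doubly stochastic). Then Σ_{i,j} ln b_{ij} ≥ Σ_{i,j} ln a_{ij}. -/
import Mathlib


open Finset

/-- If `A` is an `n × n` positive matrix with entry sum `n` and `B` is its
doubly stochastic scaling (`a_{ij} = b_{ij} λᵢ μⱼ`), then
`Σ_{i,j} ln b_{ij} ≥ Σ_{i,j} ln a_{ij}`. -/
theorem log_sum_scaling_ge (n : ℕ) (hn : 0 < n)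
    (A B : Matrix (Fin n) (Fin n) ℝ) (lam mu : Fin n → ℝ)
    (hApos : ∀ i j, 0 < A i j)
    (hAsum : ∑ i, ∑ j, A i j = n)
    (hlam : ∀ i, 0 < lam i) (hmu : ∀ j, 0 < mu j)
    (hscal : ∀ i j, A i j = B i j * lam i * mu j)
    (hBnonneg : ∀ i j, 0 ≤ B i j)
    (hBrow : ∀ i, ∑ j, B i j = 1) (hBcol : ∀ j, ∑ i, B i j = 1) :
    ∑ i, ∑ j, Real.log (A i j) ≤ ∑ i, ∑ j, Real.log (B i j) := by
  -- weighted logs of lam i * mu j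
  have hlm : ∀ i j : Fin n, 0 < lam i * mu j := fun i j => mul_pos (hlam i) (hmu j)
  have hBsum : ∑ i, ∑ j, B i j = n := by
    simp [hBrow]
  have h1 : ∑ i, ∑ j, B i j * Real.log (lam i * mu j) ≤ 0 := by
    have : ∑ i, ∑ j, B i j * Real.log (lam i * mu j)
        ≤ ∑ i, ∑ j, B i j * (lam i * mu j - 1) := by
      refine Finset.sum_le_sum fun i _ => Finset.sum_le_sum fun j _ => ?_
      exact mul_le_mul_of_nonneg_left
        (Real.log_le_sub_one_of_pos (hlm i j)) (hBnonneg i j)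
    refine this.trans ?_
    have : ∑ i, ∑ j, B i j * (lam i * mu j - 1)
        = (∑ i, ∑ j, A i j) - ∑ i, ∑ j, B i j := by
      rw [← Finset.sum_sub_distrib]
      refine Finset.sum_congr rfl fun i _ => ?_
      rw [← Finset.sum_sub_distrib]
      refine Finset.sum_congr rfl fun j _ => ?_
      rw [hscal i j]; ring
    rw [this, hAsum, hBsum]
    simp
  have h2 : ∑ i, ∑ j, B i j * Real.log (lam i * mu j)
      = (∑ i, Real.log (lam i)) + ∑ j, Real.log (mu j) := by
    have : ∀ i j : Fin n, B i j * Real.log (lam i * mu j)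
        = B i j * Real.log (lam i) + B i j * Real.log (mu j) := by
      intro i j
      rw [Real.log_mul (hlam i).ne' (hmu j).ne']
      ring
    simp only [this]
    rw [Finset.sum_congr rfl fun i _ => Finset.sum_add_distrib]
    rw [Finset.sum_add_distrib]
    congr 1
    · refine Finset.sum_congr rfl fun i _ => ?_
      rw [← Finset.sum_mul, hBrow i, one_mul]
    · rw [Finset.sum_comm]
      refine Finset.sum_congr rfl fun j _ => ?_
      rw [← Finset.sum_mul, hBcol j, one_mul]
  have hS : (∑ i, Real.log (lam i)) + ∑ j, Real.log (mu j) ≤ 0 := by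
    rw [← h2]; exact h1
  have hBpos : ∀ i j, 0 < B i j := by
    intro i j
    have h := hApos i j
    rw [hscal i j] at h
    by_contra hle
    push_neg at hle
    nlinarith [hlam i, hmu j, mul_nonneg (mul_nonneg (neg_nonneg.mpr hle) (hlam i).le) (hmu j).le]
  have h3 : ∑ i, ∑ j, Real.log (A i j)
      = (∑ i, ∑ j, Real.log (B i j))
        + (n : ℝ) * ((∑ i, Real.log (lam i)) + ∑ j, Real.log (mu j)) := by
    have hterm : ∀ i j : Fin n, Real.log (A i j)
        = Real.log (B i j) + Real.log (lam i) + Real.log (mu j) := by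
      intro i j
      rw [hscal i j, Real.log_mul (mul_pos (hBpos i j) (hlam i)).ne' (hmu j).ne',
        Real.log_mul (hBpos i j).ne' (hlam i).ne']
    simp only [hterm, Finset.sum_add_distrib, Finset.sum_const, Finset.card_univ,
      Fintype.card_fin, nsmul_eq_mul, ← Finset.sum_mul]
    rw [← Finset.mul_sum]
    ring
  rw [h3]
  nlinarith [hS, (Nat.cast_pos (α := ℝ)).mpr hn]
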